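/- If π ∈ S_n has pinnacle set P = {p_1 < p_2 < ⋯ < p_ℓ} and vale set V = {v_1 < v_2 < ⋯ < v_{ℓ+1}}, then v_{i+1} < p_i for every i ∈ {1, 2, …, ℓ}. -/

import Mathlib

/-- The extended one-line word of `w`, read 1-indexed, with the boundary
convention `π₀ = π_{n+1} = ∞`. -/
def ext (w : List ℕ) (i : ℕ) : ℕ∞ :=
  if 1 ≤ i ∧ i ≤ w.length then (w.getD (i - 1) 0 : ℕ∞) else ⊤

/-- The pinnacle set of the word `w`: values `π_i` with `π_{i-1} < π_i > π_{i+1}`. -/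
def pinnSet (w : List ℕ) : Finset ℕ :=
  ((Finset.Icc 1 w.length).filter fun i =>
      ext w (i - 1) < ext w i ∧ ext w (i + 1) < ext w i).image fun i => w.getD (i - 1) 0

/-- The vale set of the word `w`: values `π_i` with `π_{i-1} > π_i < π_{i+1}`. -/
def valeSet (w : List ℕ) : Finset ℕ :=
  ((Finset.Icc 1 w.length).filter fun i =>
      ext w i < ext w (i - 1) ∧ ext w i < ext w (i + 1)).image fun i => w.getD (i - 1) 0

/-- `w` is the one-line notation of a permutation of `[n] = {1, …, n}`. -/
def IsPermOf (n : ℕ) (w : List ℕ) : Prop := w.Perm (List.range' 1 n)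

/-- `w₁` in the `x`-factorization `w = w₁ w₂ x w₄ w₅`. -/
def fsW1 (x : ℕ) (w : List ℕ) : List ℕ :=
  ((w.take (w.idxOf x)).reverse.dropWhile fun a => decide (a < x)).reverse

/-- `w₂` in the `x`-factorization: the longest contiguous subword immediately to the
left of `x` all of whose letters are smaller than `x`. -/
def fsW2 (x : ℕ) (w : List ℕ) : List ℕ :=
  ((w.take (w.idxOf x)).reverse.takeWhile fun a => decide (a < x)).reverse

/-- `w₄` in the `x`-factorization: the longest contiguous subword immediately to the
right of `x` all of whose letters are smaller than `x`. -/
def fsW4 (x : ℕ) (w : List ℕ) : List ℕ :=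
  (w.drop (w.idxOf x + 1)).takeWhile fun a => decide (a < x)

/-- `w₅` in the `x`-factorization `w = w₁ w₂ x w₄ w₅`. -/
def fsW5 (x : ℕ) (w : List ℕ) : List ℕ :=
  (w.drop (w.idxOf x + 1)).dropWhile fun a => decide (a < x)

/-- The dual Foata–Strehl map `φ_x : w₁ w₂ x w₄ w₅ ↦ w₁ w₄ x w₂ w₅`. -/
def dualFS (x : ℕ) (w : List ℕ) : List ℕ :=
  if x ∈ w then fsW1 x w ++ fsW4 x w ++ [x] ++ fsW2 x w ++ fsW5 x w else w

/-- The dual Foata–Strehl map `φ_S` for a set `S`, i.e. the composition of the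
(commuting) maps `φ_x` over `x ∈ S`. -/
noncomputable def dualFSFinset (S : Finset ℕ) (w : List ℕ) : List ℕ :=
  S.toList.foldr dualFS w

/-- The largest letter of a word, with `wmax [] = 0`. -/
def wmax (w : List ℕ) : ℕ := w.foldr max 0

/-- The subword of `w` consisting of the letters lying in `A`. -/
def restrictTo (w : List ℕ) (A : Finset ℕ) : List ℕ :=
  w.filter fun a => decide (a ∈ A)

/-- `N_{PV}(k) = |V_k| - |P_k|` (natural subtraction). -/
def nPV (P V : Finset ℕ) (k : ℕ) : ℕ :=
  (V.filter fun v => v < k).card - (P.filter fun p => p < k).card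

/-- `N_{PV}(k) = |V_k| - |P_k|` as an integer. -/
def nPVZ (P V : Finset ℕ) (k : ℕ) : ℤ :=
  ((V.filter fun v => v < k).card : ℤ) - ((P.filter fun p => p < k).card : ℤ)

/-- `(P, V)` is admissible: some permutation of `[n]` has pinnacle set `P` and
vale set `V`. -/
def AdmissiblePair (n : ℕ) (P V : Finset ℕ) : Prop :=
  ∃ w : List ℕ, IsPermOf n w ∧ pinnSet w = P ∧ valeSet w = V

open Classical in
/-- `𝒱(P)`: the collection of all vale sets `V` for which `(P, V)` is admissible. -/
noncomputable def valeSetsOf (n : ℕ) (P : Finset ℕ) : Finset (Finset ℕ) :=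
  ((Finset.Icc 1 n).powerset).filter fun V => AdmissiblePair n P V

/-- `w` is FS-minimal: it has no double descents (with the `∞` boundary convention),
and for each pinnacle `p`, the `p`-factorization of the restriction of `w` to its
pinnacles and vales satisfies `max w₂ < max w₄`. -/
def FSMinimal (w : List ℕ) : Prop :=
  (∀ i ∈ Finset.Icc 1 w.length,
      ¬(ext w i < ext w (i - 1) ∧ ext w (i + 1) < ext w i)) ∧
  ∀ p ∈ pinnSet w,
    wmax (fsW2 p (restrictTo w (pinnSet w ∪ valeSet w))) <
      wmax (fsW4 p (restrictTo w (pinnSet w ∪ valeSet w)))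

/-- A `PV`-arrangement: a word listing each element of `P ∪ V` exactly once,
with pinnacle set `P` and vale set `V`. -/
def IsPVArrangement (P V : Finset ℕ) (α : List ℕ) : Prop :=
  α.Nodup ∧ α.toFinset = P ∪ V ∧ pinnSet α = P ∧ valeSet α = V

/-- A word is canonical (for pinnacle set `P`) if for each `p ∈ P` its
`p`-factorization satisfies `max w₂ < max w₄`. -/
def IsCanonical (P : Finset ℕ) (α : List ℕ) : Prop :=
  ∀ p ∈ P, wmax (fsW2 p α) < wmax (fsW4 p α)

/-- The number of descents of `w`: indices `j ∈ [n-1]` with `π_j > π_{j+1}`. -/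
def descentCount (w : List ℕ) : ℕ :=
  ((Finset.Icc 1 (w.length - 1)).filter fun j => w.getD j 0 < w.getD (j - 1) 0).card

/-- The original Foata–Strehl map `φ'_x`, defined like `φ_x` but with the words
`w₂, w₄` consisting of letters GREATER than `x`. -/
def origFS (x : ℕ) (w : List ℕ) : List ℕ :=
  if x ∈ w then
    ((w.take (w.idxOf x)).reverse.dropWhile fun a => decide (x < a)).reverse
      ++ ((w.drop (w.idxOf x + 1)).takeWhile fun a => decide (x < a)) ++ [x]
      ++ ((w.take (w.idxOf x)).reverse.takeWhile fun a => decide (x < a)).reverse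
      ++ ((w.drop (w.idxOf x + 1)).dropWhile fun a => decide (x < a))
  else w

/-- `C(l)`: weak compositions `(t₁, …, t_l)` of `l` with `t₁ + ⋯ + t_k ≥ k` for all `k`. -/
def weakComps (l : ℕ) : Finset (Fin l → ℕ) :=
  (Fintype.piFinset fun _ : Fin l => Finset.range (l + 1)).filter fun t =>
    (∑ i, t i) = l ∧ ∀ k : Fin l, (k : ℕ) + 1 ≤ ∑ i ∈ Finset.univ.filter (fun j => j ≤ k), t i

/-- `g_{i+1} = |G_{i+1}|`, the size of the `(i+1)`-st gap set
`G_{i+1} = {j ∈ [n] \ P : p_i < j < p_{i+1}}` (0-indexed `i`, with `p₀ = 1`). -/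
def gapCard (n : ℕ) (P : Finset ℕ) (i : ℕ) : ℕ :=
  (((Finset.Icc 1 n) \ P).filter fun j =>
      (if i = 0 then 1 else (P.sort (· ≤ ·)).getD (i - 1) 0) < j ∧
        j < (P.sort (· ≤ ·)).getD i 0).card

section Aux

variable {w : List ℕ}

lemma ext_eq_top (w : List ℕ) {i : ℕ} (h : ¬(1 ≤ i ∧ i ≤ w.length)) : ext w i = ⊤ := by
  simp only [ext, if_neg h]

lemma ext_eq_coe (w : List ℕ) {i : ℕ} (h1 : 1 ≤ i) (h2 : i ≤ w.length) :
    ext w i = (w.getD (i - 1) 0 : ℕ∞) := by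
  simp only [ext, if_pos (⟨h1, h2⟩ : 1 ≤ i ∧ i ≤ w.length)]

lemma ext_range {i : ℕ} (h : ext w i < ⊤) : 1 ≤ i ∧ i ≤ w.length := by
  by_contra hc
  rw [ext_eq_top w hc] at h
  exact lt_irrefl _ h

lemma ext_lt_top {i : ℕ} (h1 : 1 ≤ i) (h2 : i ≤ w.length) : ext w i < ⊤ := by
  rw [ext_eq_coe w h1 h2]
  exact WithTop.coe_lt_top _

lemma ext_inj (hnd : w.Nodup) {i j : ℕ} (hi : ext w i < ⊤) (hj : ext w j < ⊤)
    (h : ext w i = ext w j) : i = j := by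
  obtain ⟨hi1, hi2⟩ := ext_range hi
  obtain ⟨hj1, hj2⟩ := ext_range hj
  rw [ext_eq_coe w hi1 hi2, ext_eq_coe w hj1 hj2, Nat.cast_inj] at h
  rw [List.getD_eq_getElem w 0 (show i - 1 < w.length by omega),
    List.getD_eq_getElem w 0 (show j - 1 < w.length by omega)] at h
  have := hnd.getElem_inj_iff.mp h
  omega

lemma chain_le {i m : ℕ} (h : ∀ j, i ≤ j → j < m → ext w (j + 1) < ext w j) :
    ∀ k, i ≤ k → k ≤ m → ext w k ≤ ext w i := by
  intro k hk
  induction k, hk using Nat.le_induction with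
  | base => intro _; exact le_rfl
  | succ k hik ih =>
    intro hkm
    exact le_of_lt (lt_of_lt_of_le (h k hik (by omega)) (ih (by omega)))

lemma descend_to_vale (hnd : w.Nodup) :
    ∀ d i, w.length - i ≤ d → 1 ≤ i → ext w (i + 1) < ext w i →
      ∃ m, i < m ∧ m ≤ w.length ∧ ext w m < ext w (m - 1) ∧ ext w m < ext w (m + 1) ∧
        ∀ j, i ≤ j → j < m → ext w (j + 1) < ext w j := by
  intro d
  induction d with
  | zero =>
    intro i hd h1 hdesc
    exfalso
    have hr := ext_range (lt_of_lt_of_le hdesc le_top)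
    omega
  | succ d ih =>
    intro i hd h1 hdesc
    have hi1 : i + 1 ≤ w.length := (ext_range (lt_of_lt_of_le hdesc le_top)).2
    by_cases hc : ext w (i + 1) < ext w (i + 2)
    · refine ⟨i + 1, by omega, hi1, ?_, hc, ?_⟩
      · simpa using hdesc
      · intro j hj1 hj2
        have : j = i := by omega
        subst this; exact hdesc
    · have h1top : ext w (i + 1) < ⊤ := ext_lt_top (by omega) hi1
      have h2top : ext w (i + 2) < ⊤ := by
        rcases lt_or_ge (ext w (i + 2)) ⊤ with h | h
        · exact h
        · exact absurd (lt_of_lt_of_le h1top h) hc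
      have hne : ext w (i + 2) ≠ ext w (i + 1) := by
        intro he
        have := ext_inj hnd h2top h1top he
        omega
      have hlt : ext w (i + 2) < ext w (i + 1) := lt_of_le_of_ne (not_lt.mp hc) hne
      obtain ⟨m, hm1, hm2, hv1, hv2, hchain⟩ := ih (i + 1) (by omega) (by omega) hlt
      refine ⟨m, by omega, hm2, hv1, hv2, ?_⟩
      intro j hj1 hj2
      rcases eq_or_lt_of_le hj1 with h | h
      · subst h; exact hdesc
      · exact hchain j (by omega) hj2

lemma block_start (w : List ℕ) (pE : ℕ∞) (r : ℕ) :
    ∀ i, 1 ≤ i → (∀ j, i ≤ j → j ≤ r → ext w j < pE) →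
      ∃ a, 1 ≤ a ∧ a ≤ i ∧ (∀ j, a ≤ j → j ≤ r → ext w j < pE) ∧ ¬ ext w (a - 1) < pE := by
  intro i
  induction i using Nat.strong_induction_on with
  | _ i ih =>
    intro h1 hsm
    by_cases hc : ext w (i - 1) < pE
    · have hr := ext_range (lt_of_lt_of_le hc le_top)
      obtain ⟨a, ha1, ha2, ha3, ha4⟩ := ih (i - 1) (by omega) (by omega)
        (fun j hj1 hj2 => by
          rcases eq_or_lt_of_le hj1 with h | h
          · exact h ▸ hc
          · exact hsm j (by omega) hj2)
      exact ⟨a, ha1, by omega, ha3, ha4⟩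
    · exact ⟨i, h1, le_rfl, hsm, hc⟩

lemma first_ascent (hnd : w.Nodup) (r : ℕ) (hr : r ≤ w.length)
    (hend : ext w r < ext w (r + 1)) :
    ∀ d a, r - a ≤ d → 1 ≤ a → a ≤ r →
      ∃ m, a ≤ m ∧ m ≤ r ∧ ext w m < ext w (m + 1) ∧
        ∀ j, a ≤ j → j < m → ext w (j + 1) < ext w j := by
  intro d
  induction d with
  | zero =>
    intro a hd h1 h2
    have ha : a = r := by omega
    subst ha
    exact ⟨a, le_rfl, le_rfl, hend, fun j hj1 hj2 => absurd hj2 (by omega)⟩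
  | succ d ih =>
    intro a hd h1 h2
    by_cases hc : ext w a < ext w (a + 1)
    · exact ⟨a, le_rfl, h2, hc, fun j hj1 hj2 => absurd hj2 (by omega)⟩
    · have har : a < r := by
        rcases eq_or_lt_of_le h2 with h | h
        · subst h; exact absurd hend hc
        · exact h
      have hne : ext w (a + 1) ≠ ext w a := by
        intro he
        have := ext_inj hnd (ext_lt_top (by omega) (by omega)) (ext_lt_top h1 (by omega)) he
        omega
      have hlt : ext w (a + 1) < ext w a := lt_of_le_of_ne (not_lt.mp hc) hne
      obtain ⟨m, hm1, hm2, hm3, hchain⟩ := ih (a + 1) (by omega) (by omega) (by omega)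
      refine ⟨m, by omega, hm2, hm3, fun j hj1 hj2 => ?_⟩
      rcases eq_or_lt_of_le hj1 with h | h
      · subst h; exact hlt
      · exact hchain j (by omega) hj2

end Aux
section Key

variable {w : List ℕ}

lemma key_card (hnd : w.Nodup) {ip : ℕ} (h1 : 1 ≤ ip) (h2 : ip ≤ w.length)
    (hp1 : ext w (ip - 1) < ext w ip) (hp2 : ext w (ip + 1) < ext w ip) :
    ((Finset.Icc 1 w.length).filter fun i =>
        (ext w (i - 1) < ext w i ∧ ext w (i + 1) < ext w i) ∧ ext w i < ext w ip).card + 2 ≤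
    ((Finset.Icc 1 w.length).filter fun i =>
        (ext w i < ext w (i - 1) ∧ ext w i < ext w (i + 1)) ∧ ext w i < ext w ip).card := by
  classical
  set pE := ext w ip with hpE
  have hpEtop : pE < ⊤ := ext_lt_top h1 h2
  set PPos := (Finset.Icc 1 w.length).filter (fun i =>
      (ext w (i - 1) < ext w i ∧ ext w (i + 1) < ext w i) ∧ ext w i < pE) with hPPos
  set VPos := (Finset.Icc 1 w.length).filter (fun i =>
      (ext w i < ext w (i - 1) ∧ ext w i < ext w (i + 1)) ∧ ext w i < pE) with hVPos
  set S := insert ip PPos with hS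
  -- basic facts about members of S
  have hmem : ∀ i ∈ S, 1 ≤ i ∧ i ≤ w.length ∧ ext w (i - 1) < ext w i ∧
      ext w (i + 1) < ext w i := by
    intro i hi
    rcases Finset.mem_insert.mp hi with h | h
    · subst h; exact ⟨h1, h2, hp1, hp2⟩
    · obtain ⟨hIcc, hpred⟩ := Finset.mem_filter.mp h
      obtain ⟨a, b⟩ := Finset.mem_Icc.mp hIcc
      exact ⟨a, b, hpred.1.1, hpred.1.2⟩
  -- choose the "next vale to the right" function G
  have hEX : ∀ i : ℕ, ∃ m, i ∈ S →
      i < m ∧ m ≤ w.length ∧ ext w m < ext w (m - 1) ∧ ext w m < ext w (m + 1) ∧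
        ∀ j, i ≤ j → j < m → ext w (j + 1) < ext w j := by
    intro i
    by_cases hi : i ∈ S
    · obtain ⟨hi1, hi2, _, hdesc⟩ := hmem i hi
      obtain ⟨m, hm⟩ := descend_to_vale hnd w.length i (by omega) hi1 hdesc
      exact ⟨m, fun _ => hm⟩
    · exact ⟨0, fun h => absurd h hi⟩
  choose G hG using hEX
  -- value of G is smaller
  have hGlt : ∀ i ∈ S, ext w (G i) < ext w i := by
    intro i hi
    obtain ⟨him, hlen, hv1, hv2, hchain⟩ := hG i hi
    calc ext w (G i) < ext w (G i - 1) := hv1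
      _ ≤ ext w i := chain_le hchain (G i - 1) (by omega) (by omega)
  -- interleaving
  have hinter : ∀ i₁ ∈ S, ∀ i₂ ∈ S, i₁ < i₂ → G i₁ < i₂ := by
    intro i₁ hi₁ i₂ hi₂ hlt
    by_contra hc
    obtain ⟨_, _, _, hchain⟩ := hG i₁ hi₁
    obtain ⟨hi₂1, _, hpl, _⟩ := hmem i₂ hi₂
    have := hchain.2 (i₂ - 1) (by omega) (by omega)
    rw [show i₂ - 1 + 1 = i₂ by omega] at this
    exact absurd hpl (not_lt.mpr (le_of_lt this))
  have hinj : Set.InjOn G ↑S := by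
    intro i₁ hi₁ i₂ hi₂ he
    by_contra hne
    rcases lt_or_gt_of_ne hne with h | h
    · have h1' := hinter i₁ hi₁ i₂ hi₂ h
      have h2' := (hG i₂ hi₂).1
      omega
    · have h1' := hinter i₂ hi₂ i₁ hi₁ h
      have h2' := (hG i₁ hi₁).1
      omega
  -- the left block of ip
  have hip2 : 2 ≤ ip := by
    have := ext_range (lt_of_lt_of_le hp1 le_top)
    omega
  set r := ip - 1 with hr
  have hrip : r + 1 = ip := by omega
  have hrw : ext w r < pE := hp1
  obtain ⟨a, ha1, ha2, hsm, hout⟩ := block_start w pE r r (by omega)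
    (fun j hj1 hj2 => by
      have : j = r := by omega
      subst this; exact hrw)
  have hend : ext w r < ext w (r + 1) := by rw [hrip, ← hpE]; exact hrw
  obtain ⟨m0, hm0a, hm0r, hm0asc, hchain0⟩ :=
    first_ascent hnd r (by omega) hend (r - a) a le_rfl ha1 ha2
  have hm0small : ext w m0 < pE := hsm m0 hm0a hm0r
  have hm0vale : ext w m0 < ext w (m0 - 1) := by
    rcases eq_or_lt_of_le hm0a with h | h
    · subst h
      exact lt_of_lt_of_le hm0small (not_lt.mp hout)
    · have := hchain0 (m0 - 1) (by omega) (by omega)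
      rwa [show m0 - 1 + 1 = m0 by omega] at this
  have hm0mem : m0 ∈ VPos := by
    rw [hVPos]
    refine Finset.mem_filter.mpr ⟨Finset.mem_Icc.mpr ⟨by omega, by omega⟩,
      ⟨hm0vale, hm0asc⟩, hm0small⟩
  -- m0 is not in the image of G
  have hm0not : ∀ i ∈ S, G i ≠ m0 := by
    intro i hi hGi
    rcases Finset.mem_insert.mp hi with hcase | hcase
    · subst hcase
      have := (hG i hi).1
      omega
    · obtain ⟨hIcc, hpred⟩ := Finset.mem_filter.mp hcase
      obtain ⟨hi1, hi2⟩ := Finset.mem_Icc.mp hIcc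
      have hsmalli : ext w i < pE := hpred.2
      have hiltm0 : i < m0 := hGi ▸ (hG i hi).1
      obtain ⟨_, _, _, _, hchain⟩ := hG i hi
      rcases lt_trichotomy i a with hia | hia | hia
      · -- i < a : descend chain passes a-1 which is big
        have hle : ext w (a - 1) ≤ ext w i := by
          have := chain_le hchain (a - 1) (by omega) (by omega)
          exact this
        exact absurd (lt_of_le_of_lt hle hsmalli) hout
      · -- i = a : pinnacle at block start impossible
        subst hia
        exact hout (lt_trans hpred.1.1 hsmalli)
      · -- a < i : the chain from a descends at i, contradicting pinnacle
        have := hchain0 (i - 1) (by omega) (by omega)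
        rw [show i - 1 + 1 = i by omega] at this
        exact absurd hpred.1.1 (not_lt.mpr (le_of_lt this))
  -- the image is inside VPos
  have hsub : insert m0 (S.image G) ⊆ VPos := by
    intro x hx
    rcases Finset.mem_insert.mp hx with h | h
    · subst h; exact hm0mem
    · obtain ⟨i, hi, rfl⟩ := Finset.mem_image.mp h
      obtain ⟨him, hlen, hv1, hv2, _⟩ := hG i hi
      have hival : ext w (G i) < pE := by
        rcases Finset.mem_insert.mp hi with hcase | hcase
        · subst hcase; exact hGlt i hi
        · exact lt_trans (hGlt i hi) (Finset.mem_filter.mp hcase).2.2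
      refine Finset.mem_filter.mpr ⟨Finset.mem_Icc.mpr ⟨by omega, hlen⟩, ⟨hv1, hv2⟩, hival⟩
  -- cardinalities
  have hipnot : ip ∉ PPos := by
    intro h
    exact lt_irrefl pE (Finset.mem_filter.mp h).2.2
  have hm0notim : m0 ∉ S.image G := by
    intro h
    obtain ⟨i, hi, hGi⟩ := Finset.mem_image.mp h
    exact hm0not i hi hGi
  have hc1 : (insert m0 (S.image G)).card = S.card + 1 := by
    rw [Finset.card_insert_of_notMem hm0notim, Finset.card_image_of_injOn hinj]
  have hc2 : S.card = PPos.card + 1 := by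
    rw [hS, Finset.card_insert_of_notMem hipnot]
  have := Finset.card_le_card hsub
  omega

end Key
section Sorted

lemma filter_card_eq_countP (S : Finset ℕ) (p : ℕ → Prop) [DecidablePred p] :
    (S.filter p).card = (S.sort (· ≤ ·)).countP (fun x => decide (p x)) := by
  rw [← Multiset.coe_countP, Finset.sort_eq, Multiset.countP_eq_card_filter,
    ← Finset.filter_val]
  rfl

lemma sorted_countP_eq {l : List ℕ} (hs : l.Pairwise (· < ·)) {k : ℕ} (hk : k < l.length)
    {v : ℕ} (hv : v = l[k]) :
    l.countP (fun x => decide (x < v)) = k := by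
  have hkey := List.pairwise_iff_getElem.mp hs
  have htake : (l.take k).countP (fun x => decide (x < v)) = k := by
    rw [List.countP_eq_length.mpr, List.length_take]
    · omega
    · intro a ha
      obtain ⟨i, hi, rfl⟩ := List.mem_iff_getElem.mp ha
      have hi' : i < k := by
        simp only [List.length_take] at hi; omega
      rw [List.getElem_take]
      simp only [decide_eq_true_eq]
      exact hv ▸ hkey i k (by omega) hk (by omega)
  have hdrop : (l.drop k).countP (fun x => decide (x < v)) = 0 := by
    rw [List.countP_eq_zero]
    intro a ha
    obtain ⟨i, hi, rfl⟩ := List.mem_iff_getElem.mp ha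
    rw [List.getElem_drop]
    simp only [decide_eq_true_eq, not_lt]
    rcases Nat.eq_zero_or_pos i with h | h
    · subst h; simp [hv]
    · have hi' : k + i < l.length := by
        simp only [List.length_drop] at hi; omega
      exact hv ▸ le_of_lt (hkey k (k + i) hk hi' (by omega))
  have hsplit : l.countP (fun x => decide (x < v)) =
      (l.take k).countP (fun x => decide (x < v)) +
        (l.drop k).countP (fun x => decide (x < v)) := by
    conv_lhs => rw [← List.take_append_drop k l]
    rw [List.countP_append]
  omega

lemma sorted_countP_le {l : List ℕ} (hs : l.Pairwise (· < ·)) {k v : ℕ}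
    (hge : ¬ l.getD k 0 < v) : l.countP (fun x => decide (x < v)) ≤ k := by
  by_cases hk : k < l.length
  · rw [List.getD_eq_getElem l 0 hk] at hge
    have hkey := List.pairwise_iff_getElem.mp hs
    have hdrop : (l.drop k).countP (fun x => decide (x < v)) = 0 := by
      rw [List.countP_eq_zero]
      intro a ha
      obtain ⟨i, hi, rfl⟩ := List.mem_iff_getElem.mp ha
      have hi' : k + i < l.length := by
        simp only [List.length_drop] at hi; omega
      rw [List.getElem_drop]
      simp only [decide_eq_true_eq, not_lt]
      have hlk : l[k] ≤ l[k + i] := by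
        rcases Nat.eq_zero_or_pos i with h | h
        · subst h; simp
        · exact le_of_lt (hkey k (k + i) hk hi' (by omega))
      exact le_trans (not_lt.mp hge) hlk
    have hsplit : l.countP (fun x => decide (x < v)) =
        (l.take k).countP (fun x => decide (x < v)) +
          (l.drop k).countP (fun x => decide (x < v)) := by
      conv_lhs => rw [← List.take_append_drop k l]
      rw [List.countP_append]
    have h2 := List.countP_le_length (p := fun x => decide (x < v)) (l := l.take k)
    have h3 : (l.take k).length ≤ k := by simp [List.length_take]
    omega
  · have := List.countP_le_length (p := fun x => decide (x < v)) (l := l)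
    omega

lemma sort_getD_lt {S : Finset ℕ} {k v : ℕ}
    (h : k + 1 ≤ (S.filter (fun x => x < v)).card) :
    (S.sort (· ≤ ·)).getD k 0 < v := by
  by_contra hge
  have hle := sorted_countP_le (List.sortedLT_iff_pairwise.mp (Finset.sortedLT_sort S)) hge
  rw [filter_card_eq_countP] at h
  omega

lemma filter_card_of_sort {S : Finset ℕ} {k : ℕ} (hk : k < S.card) :
    (S.filter (fun x => x < (S.sort (· ≤ ·)).getD k 0)).card = k := by
  have hk' : k < (S.sort (· ≤ ·)).length := by rw [Finset.length_sort]; exact hk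
  rw [filter_card_eq_countP]
  exact sorted_countP_eq (List.sortedLT_iff_pairwise.mp (Finset.sortedLT_sort S)) hk' (List.getD_eq_getElem _ 0 hk')

lemma val_injOn {w : List ℕ} (hnd : w.Nodup) {T : Finset ℕ}
    (hT : T ⊆ Finset.Icc 1 w.length) :
    Set.InjOn (fun i => w.getD (i - 1) 0) ↑T := by
  intro i hi j hj h
  obtain ⟨hi1, hi2⟩ := Finset.mem_Icc.mp (hT (Finset.mem_coe.mp hi))
  obtain ⟨hj1, hj2⟩ := Finset.mem_Icc.mp (hT (Finset.mem_coe.mp hj))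
  simp only at h
  rw [List.getD_eq_getElem w 0 (show i - 1 < w.length by omega),
    List.getD_eq_getElem w 0 (show j - 1 < w.length by omega)] at h
  have := hnd.getElem_inj_iff.mp h
  omega

lemma value_filter_card {w : List ℕ} (hnd : w.Nodup) (pred : ℕ → Prop)
    [DecidablePred pred] (pv : ℕ) :
    ((((Finset.Icc 1 w.length).filter pred).image (fun i => w.getD (i - 1) 0)).filter
        (fun x => x < pv)).card
      = ((Finset.Icc 1 w.length).filter (fun i => pred i ∧ w.getD (i - 1) 0 < pv)).card := by
  rw [Finset.filter_image, Finset.card_image_of_injOn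
    (val_injOn hnd ((Finset.filter_subset _ _).trans (Finset.filter_subset _ _))),
    Finset.filter_filter]

end Sorted

theorem vale_lt_pinnacle_aux (n : ℕ) (π : List ℕ) (hπ : IsPermOf n π) :
    ∀ j < (pinnSet π).card,
      ((valeSet π).sort (· ≤ ·)).getD (j + 1) 0 <
        ((pinnSet π).sort (· ≤ ·)).getD j 0 := by
  have hnd : π.Nodup := hπ.nodup_iff.mpr (List.nodup_range' (s := 1) (n := n))
  intro j hj
  have hjlen : j < ((pinnSet π).sort (· ≤ ·)).length := by
    rw [Finset.length_sort]; exact hj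
  set p := ((pinnSet π).sort (· ≤ ·)).getD j 0 with hp
  have hpP : p ∈ pinnSet π := by
    rw [hp, List.getD_eq_getElem _ 0 hjlen]
    exact (Finset.mem_sort _).mp (List.getElem_mem _)
  have hpP' : p ∈ ((Finset.Icc 1 π.length).filter fun i =>
      ext π (i - 1) < ext π i ∧ ext π (i + 1) < ext π i).image fun i => π.getD (i - 1) 0 := hpP
  obtain ⟨ip, hipmem, hipval⟩ := Finset.mem_image.mp hpP'
  obtain ⟨hIcc, hpin⟩ := Finset.mem_filter.mp hipmem
  obtain ⟨hip1, hip2⟩ := Finset.mem_Icc.mp hIcc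
  have hkey := key_card hnd hip1 hip2 hpin.1 hpin.2
  have hextip : ext π ip = (p : ℕ∞) := by
    rw [ext_eq_coe π hip1 hip2, hipval]
  have hPeq : ((Finset.Icc 1 π.length).filter fun i =>
        (ext π (i - 1) < ext π i ∧ ext π (i + 1) < ext π i) ∧ ext π i < ext π ip)
      = ((Finset.Icc 1 π.length).filter fun i =>
        (ext π (i - 1) < ext π i ∧ ext π (i + 1) < ext π i) ∧ π.getD (i - 1) 0 < p) := by
    apply Finset.filter_congr
    intro x hx
    obtain ⟨hx1, hx2⟩ := Finset.mem_Icc.mp hx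
    rw [hextip, ext_eq_coe π hx1 hx2, Nat.cast_lt]
  have hVeq : ((Finset.Icc 1 π.length).filter fun i =>
        (ext π i < ext π (i - 1) ∧ ext π i < ext π (i + 1)) ∧ ext π i < ext π ip)
      = ((Finset.Icc 1 π.length).filter fun i =>
        (ext π i < ext π (i - 1) ∧ ext π i < ext π (i + 1)) ∧ π.getD (i - 1) 0 < p) := by
    apply Finset.filter_congr
    intro x hx
    obtain ⟨hx1, hx2⟩ := Finset.mem_Icc.mp hx
    rw [hextip, ext_eq_coe π hx1 hx2, Nat.cast_lt]
  rw [hPeq, hVeq] at hkey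
  have hPcard := value_filter_card hnd
    (fun i => ext π (i - 1) < ext π i ∧ ext π (i + 1) < ext π i) p
  have hVcard := value_filter_card hnd
    (fun i => ext π i < ext π (i - 1) ∧ ext π i < ext π (i + 1)) p
  have hPj : ((pinnSet π).filter (fun x => x < p)).card = j := filter_card_of_sort hj
  have hPj' : ((Finset.Icc 1 π.length).filter fun i =>
      (ext π (i - 1) < ext π i ∧ ext π (i + 1) < ext π i) ∧ π.getD (i - 1) 0 < p).card = j := by
    rw [← hPcard]
    exact hPj
  have hV2 : j + 2 ≤ ((valeSet π).filter (fun x => x < p)).card := by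
    show j + 2 ≤ (Finset.filter (fun x => x < p) (((Finset.Icc 1 π.length).filter fun i =>
      ext π i < ext π (i - 1) ∧ ext π i < ext π (i + 1)).image fun i => π.getD (i - 1) 0)).card
    rw [hVcard]
    omega
  exact sort_getD_lt (by omega : (j + 1) + 1 ≤ _)


/-- Lemma 4.2(d): if `π ∈ S_n` has pinnacle set
`P = {p₁ < ⋯ < p_ℓ}` and vale set `V = {v₁ < ⋯ < v_{ℓ+1}}`, then `v_{i+1} < p_i`
for all `i ∈ [ℓ]` (0-indexed: the `(j+1)`-st entry of the sorted vale list is smaller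
than the `j`-th entry of the sorted pinnacle list). -/
theorem vale_lt_pinnacle (n : ℕ) (π : List ℕ) (hπ : IsPermOf n π) :
    ∀ j < (pinnSet π).card,
      ((valeSet π).sort (· ≤ ·)).getD (j + 1) 0 <
        ((pinnSet π).sort (· ≤ ·)).getD j 0 := by
  exact vale_lt_pinnacle_aux n π hπ
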